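/- For every k ≥ 0, let w_{k,n} denote the number of (unconstrained) weighted Motzkin paths of length n with total increment −k. Then Σ_{n≥0} w_{k,n}·z^n = B·D^k in ℤ[[z]], where D := Σ_{n≥1} d_n·z^n and B := Σ_{n≥0} b_n·z^n. (This is the statement that the generating series of weighted Motzkin paths going from height i to height j is B·D^{|i−j|}; by the up–down symmetry of the step set the case of total increment +k is identical.) -/

import Mathlib

/-- A weighted Motzkin step: an up step, a down step, or one of four distinguishable
horizontal steps. -/
inductive WStep : Type
  | up : WStep
  | down : WStep
  | h1 : WStep
  | h2 : WStep
  | h3 : WStep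
  | h4 : WStep

/-- The height increment of a weighted Motzkin step. -/
def WStep.inc : WStep → ℤ
  | .up => 1
  | .down => -1
  | _ => 0

/-- The total height increment of a weighted Motzkin path. -/
def hsum (p : List WStep) : ℤ := (p.map WStep.inc).sum

/-- `dnum n` : number of weighted Motzkin paths of length `n` with total increment `-1`
whose proper partial heights (after each step except the last) are all nonnegative. -/
noncomputable def dnum (n : ℕ) : ℕ :=
  Nat.card {p : List WStep // p.length = n ∧ hsum p = -1 ∧
    ∀ i < n, 0 ≤ hsum (p.take i)}

/-- `bnum n` : number of unconstrained weighted Motzkin paths of length `n` with total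
increment `0`. -/
noncomputable def bnum (n : ℕ) : ℕ :=
  Nat.card {p : List WStep // p.length = n ∧ hsum p = 0}

/-- The generating series `D = Σ_{n≥1} d_n z^n`. -/
noncomputable def Dser : PowerSeries ℤ := PowerSeries.mk fun n => (dnum n : ℤ)

/-- The generating series `B = Σ_{n≥0} b_n z^n`. -/
noncomputable def Bser : PowerSeries ℤ := PowerSeries.mk fun n => (bnum n : ℤ)


/-- `wnum k n` : number of unconstrained weighted Motzkin paths of length `n` with total
increment `-k`. -/
noncomputable def wnum (k n : ℕ) : ℕ :=
  Nat.card {p : List WStep // p.length = n ∧ hsum p = -(k : ℤ)}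

deriving instance DecidableEq for WStep
instance : Fintype WStep :=
  ⟨{.up, .down, .h1, .h2, .h3, .h4}, fun x => by cases x <;> simp⟩

lemma hsum_nil : hsum [] = 0 := rfl

lemma hsum_append (p q : List WStep) : hsum (p ++ q) = hsum p + hsum q := by
  simp [hsum]

lemma neg_one_le_inc (s : WStep) : -1 ≤ s.inc := by cases s <;> norm_num [WStep.inc]

lemma hsum_take_le (p : List WStep) (i : ℕ) :
    hsum (p.take i) - 1 ≤ hsum (p.take (i + 1)) := by
  rw [List.take_succ, hsum_append]
  cases h : p[i]? with
  | none => simp [hsum]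
  | some s => have := neg_one_le_inc s; simp [hsum]; omega

lemma exists_first (p : List WStep) (hp : hsum p ≤ -1) :
    ∃ m, m ≤ p.length ∧ hsum (p.take m) = -1 ∧ ∀ i < m, 0 ≤ hsum (p.take i) := by
  classical
  have hex : ∃ m, hsum (p.take m) ≤ -1 := ⟨p.length, by simpa using hp⟩
  obtain ⟨j, hj⟩ : ∃ j, Nat.find hex = j + 1 := by
    cases h : Nat.find hex with
    | zero =>
      exfalso
      have := Nat.find_spec hex
      rw [h] at this
      simp [hsum] at this
    | succ j => exact ⟨j, rfl⟩
  have hpos : ∀ i < j + 1, 0 ≤ hsum (p.take i) := by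
    intro i hi
    have hi' : i < Nat.find hex := by omega
    have := Nat.find_min hex hi'
    omega
  refine ⟨j + 1, ?_, ?_, hpos⟩
  · have hlen : hsum (p.take p.length) ≤ -1 := by simpa using hp
    have := Nat.find_min' hex hlen
    omega
  · have hm : hsum (p.take (j + 1)) ≤ -1 := by
      have := Nat.find_spec hex
      rwa [hj] at this
    have h1 := hsum_take_le p j
    have h2 := hpos j (Nat.lt_succ_self j)
    omega

lemma not_lt_len {q₁ r₁ q₂ r₂ : List WStep} (h : q₁ ++ r₁ = q₂ ++ r₂)
    (hq₁ : hsum q₁ = -1) (hq₂' : ∀ i < q₂.length, 0 ≤ hsum (q₂.take i)) :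
    ¬ q₁.length < q₂.length := by
  intro hlt
  have e1 : (q₁ ++ r₁).take q₁.length = q₁ := by
    rw [List.take_append_of_le_length le_rfl, List.take_length]
  have e2 : (q₂ ++ r₂).take q₁.length = q₂.take q₁.length :=
    List.take_append_of_le_length hlt.le
  have := hq₂' q₁.length hlt
  rw [← e2, ← h, e1, hq₁] at this
  omega

lemma prefix_unique {q₁ r₁ q₂ r₂ : List WStep} (h : q₁ ++ r₁ = q₂ ++ r₂)
    (hq₁ : hsum q₁ = -1) (hq₁' : ∀ i < q₁.length, 0 ≤ hsum (q₁.take i))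
    (hq₂ : hsum q₂ = -1) (hq₂' : ∀ i < q₂.length, 0 ≤ hsum (q₂.take i)) :
    q₁ = q₂ := by
  have h1 := not_lt_len h hq₁ hq₂'
  have h2 := not_lt_len h.symm hq₂ hq₁'
  have hlen : q₁.length = q₂.length := by omega
  have e1 : (q₁ ++ r₁).take q₁.length = q₁ := by
    rw [List.take_append_of_le_length le_rfl, List.take_length]
  have e2 : (q₂ ++ r₂).take q₂.length = q₂ := by
    rw [List.take_append_of_le_length le_rfl, List.take_length]
  rw [← e1, ← e2, h, hlen]

lemma finite_aux (n : ℕ) (P : List WStep → Prop) :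
    Finite {p : List WStep // p.length = n ∧ P p} := by
  have : {p : List WStep | p.length = n ∧ P p}.Finite :=
    (List.finite_length_eq WStep n).subset fun p hp => hp.1
  exact this.to_subtype

lemma wnum_succ_eq (k n : ℕ) :
    wnum (k + 1) n = ∑ m ∈ Finset.range (n + 1), dnum m * wnum k (n - m) := by
  classical
  have hQ : ∀ m : ℕ, Finite {p : List WStep // p.length = m ∧ hsum p = -1 ∧
      ∀ i < m, 0 ≤ hsum (p.take i)} := fun m => finite_aux m _
  have hW : ∀ m : ℕ, Finite {p : List WStep // p.length = m ∧ hsum p = -(k : ℤ)} :=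
    fun m => finite_aux m _
  set Q : ℕ → Type := fun m => {p : List WStep // p.length = m ∧ hsum p = -1 ∧
      ∀ i < m, 0 ≤ hsum (p.take i)} with hQdef
  set R : ℕ → Type := fun m => {p : List WStep // p.length = m ∧ hsum p = -(k : ℤ)} with hRdef
  set W : Type := {p : List WStep // p.length = n ∧ hsum p = -((k + 1 : ℕ) : ℤ)} with hWdef
  have key : Nat.card (Σ m : Fin (n + 1), Q m.1 × R (n - m.1)) = Nat.card W := by
    apply Nat.card_eq_of_bijective (fun x => ⟨x.2.1.1 ++ x.2.2.1, by
      obtain ⟨m, q, r⟩ := x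
      obtain ⟨hq1, hq2, hq3⟩ := q.2
      obtain ⟨hr1, hr2⟩ := r.2
      constructor
      · rw [List.length_append, hq1, hr1]
        have := m.2
        omega
      · rw [hsum_append, hq2, hr2]
        push_cast
        ring⟩)
    constructor
    · rintro ⟨m₁, q₁, r₁⟩ ⟨m₂, q₂, r₂⟩ hf
      have h : q₁.1 ++ r₁.1 = q₂.1 ++ r₂.1 := congrArg Subtype.val hf
      have hqq : q₁.1 = q₂.1 := by
        apply prefix_unique h q₁.2.2.1 _ q₂.2.2.1
        · intro i hi; exact q₂.2.2.2 i (by rw [← q₂.2.1]; exact hi)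
        · intro i hi; exact q₁.2.2.2 i (by rw [← q₁.2.1]; exact hi)
      have hm : m₁ = m₂ := by
        apply Fin.ext
        rw [← q₁.2.1, ← q₂.2.1, hqq]
      subst hm
      have hrr : r₁.1 = r₂.1 := by
        apply List.append_cancel_left (as := q₁.1)
        rw [h, hqq]
      have hpair : (q₁, r₁) = (q₂, r₂) := by
        rw [Prod.ext_iff]
        exact ⟨Subtype.ext hqq, Subtype.ext hrr⟩
      rw [hpair]
    · rintro ⟨p, hp1, hp2⟩
      have hple : hsum p ≤ -1 := by rw [hp2]; push_cast; omega
      obtain ⟨m, hm1, hm2, hm3⟩ := exists_first p hple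
      have hmn : m < n + 1 := by omega
      refine ⟨⟨⟨m, hmn⟩, ⟨p.take m, ?_, hm2, ?_⟩, ⟨p.drop m, ?_, ?_⟩⟩, ?_⟩
      · simp only [Fin.val_mk, List.length_take]; omega
      · simp only [Fin.val_mk]
        intro i hi
        rw [List.take_take, min_eq_left (by omega : i ≤ m)]
        exact hm3 i hi
      · simp only [Fin.val_mk, List.length_drop, hp1]
      · have := hsum_append (p.take m) (p.drop m)
        rw [List.take_append_drop] at this
        rw [hp2] at this
        push_cast at this ⊢
        omega
      · exact Subtype.ext (List.take_append_drop m p)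
  have : wnum (k + 1) n = Nat.card (Σ m : Fin (n + 1), Q m.1 × R (n - m.1)) := by
    rw [key]; rfl
  rw [this]
  haveI : ∀ m : ℕ, Fintype (Q m) := fun m => Fintype.ofFinite _
  haveI : ∀ m : ℕ, Fintype (R m) := fun m => Fintype.ofFinite _
  rw [Nat.card_eq_fintype_card, Fintype.card_sigma,
    ← Fin.sum_univ_eq_sum_range (fun m => dnum m * wnum k (n - m)) (n + 1)]
  apply Finset.sum_congr rfl
  intro m _
  rw [Fintype.card_prod]
  have e1 : dnum m.1 = Fintype.card (Q m.1) := Nat.card_eq_fintype_card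
  have e2 : wnum k (n - m.1) = Fintype.card (R (n - m.1)) := Nat.card_eq_fintype_card
  rw [← e1, ← e2]

/-- The generating series of weighted Motzkin paths of total increment `-k` is `B·D^k`. -/
theorem motzkin_paths_increment_k (k : ℕ) :
    (PowerSeries.mk fun n => (wnum k n : ℤ)) = Bser * Dser ^ k := by
  induction k with
  | zero =>
    rw [pow_zero, mul_one, Bser]
    ext n
    rw [PowerSeries.coeff_mk, PowerSeries.coeff_mk]
    congr 1
  | succ k ih =>
    have key : (PowerSeries.mk fun n => (wnum (k + 1) n : ℤ)) =
        Dser * PowerSeries.mk fun n => (wnum k n : ℤ) := by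
      ext n
      rw [PowerSeries.coeff_mk, PowerSeries.coeff_mul,
        Finset.Nat.sum_antidiagonal_eq_sum_range_succ_mk, wnum_succ_eq]
      push_cast
      apply Finset.sum_congr rfl
      intro m _
      rw [Dser, PowerSeries.coeff_mk, PowerSeries.coeff_mk]
    rw [key, ih, pow_succ]
    ring
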